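/- Let A be an invertible n×n real matrix with rows a₁ᵀ,…,aₙᵀ, let G be a connected undirected simple graph on n vertices (n ≥ 2) with Laplacian L, let Pᵢ = I − aᵢaᵢᵀ/(aᵢᵀaᵢ), P = diag(P₁,…,Pₙ), and L̄ = L ⊗ Iₙ. Let ρ denote the smallest nonzero eigenvalue of the symmetric positive semidefinite matrix P L̄ P (equivalently, of P L̄), and let λ₂(L) denote the second-smallest eigenvalue of L counted with multiplicity (the algebraic connectivity of G). Then ρ ≤ λ₂(L). -/

import Mathlib

open Matrix
open scoped Kronecker

/-- The orthogonal projection `Pᵢ = I - aᵢaᵢᵀ/(aᵢᵀaᵢ)` onto the hyperplane `{z : aᵢᵀz = 0}`. -/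
noncomputable def projMat {n : ℕ} (a : Fin n → ℝ) : Matrix (Fin n) (Fin n) ℝ :=
  1 - (a ⬝ᵥ a)⁻¹ • vecMulVec a a

/-- The block-diagonal matrix `P = diag(P₁,…,Pₘ)`, acting on `(ℝⁿ)ᵐ ≅ ℝ^{mn}`
(indexed by pairs `(block, coordinate)`). -/
noncomputable def blockP {m n : ℕ} (a : Fin m → Fin n → ℝ) :
    Matrix (Fin m × Fin n) (Fin m × Fin n) ℝ :=
  Matrix.of fun p q => if p.1 = q.1 then projMat (a p.1) p.2 q.2 else 0

open Polynomial in
lemma RhoAux.charpoly_conj {ι : Type*} [Fintype ι] [DecidableEq ι] (U D V : Matrix ι ι ℝ)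
    (hUV : U * V = 1) : (U * D * V).charpoly = D.charpoly := by
  have h1 : (C : ℝ →+* ℝ[X]).mapMatrix U * (C : ℝ →+* ℝ[X]).mapMatrix V = 1 := by
    rw [← RingHom.map_mul, hUV, RingHom.map_one]
  unfold Matrix.charpoly
  have key : charmatrix (U * D * V) =
      (C : ℝ →+* ℝ[X]).mapMatrix U * charmatrix D * (C : ℝ →+* ℝ[X]).mapMatrix V := by
    unfold charmatrix
    rw [mul_sub, sub_mul]
    congr 1
    · rw [mul_assoc, scalar_commute X (Commute.all X) _, ← mul_assoc, h1, one_mul]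
    · rw [← RingHom.map_mul, ← RingHom.map_mul]
  rw [key, det_mul, det_mul, mul_comm ((C : ℝ →+* ℝ[X]).mapMatrix U).det, mul_assoc,
    ← det_mul, h1, det_one, mul_one]

open Polynomial in
lemma RhoAux.charpoly_herm {ι : Type*} [Fintype ι] [DecidableEq ι] {M : Matrix ι ι ℝ}
    (hM : M.IsHermitian) : M.charpoly = ∏ i, (X - C (hM.eigenvalues i)) := by
  have hdiag : (diagonal (RCLike.ofReal ∘ hM.eigenvalues) : Matrix ι ι ℝ).charpoly
      = ∏ i, (X - C (hM.eigenvalues i)) := by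
    unfold Matrix.charpoly
    rw [show charmatrix (diagonal (RCLike.ofReal ∘ hM.eigenvalues) : Matrix ι ι ℝ)
        = diagonal (fun i => X - C (hM.eigenvalues i)) by
      ext i j
      by_cases h : i = j <;> simp [charmatrix_apply, diagonal, h]]
    simp [det_diagonal]
  conv_lhs => rw [hM.spectral_theorem]
  rw [← hdiag]
  exact RhoAux.charpoly_conj _ _ _ (by simp)

open Polynomial in
lemma RhoAux.roots_herm {ι : Type*} [Fintype ι] [DecidableEq ι] {M : Matrix ι ι ℝ}
    (hM : M.IsHermitian) : M.charpoly.roots = Finset.univ.val.map hM.eigenvalues := by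
  rw [RhoAux.charpoly_herm hM]
  have : (∏ i : ι, (X - C (hM.eigenvalues i)))
      = ((Finset.univ.val.map hM.eigenvalues).map fun a => X - C a).prod := by
    rw [Multiset.map_map]; rfl
  rw [this, Polynomial.roots_multiset_prod_X_sub_C]

open Polynomial in
lemma RhoAux.isRoot_herm {ι : Type*} [Fintype ι] [DecidableEq ι] {M : Matrix ι ι ℝ}
    (hM : M.IsHermitian) (i : ι) : M.charpoly.IsRoot (hM.eigenvalues i) := by
  rw [Polynomial.IsRoot, RhoAux.charpoly_herm hM, eval_prod]
  exact Finset.prod_eq_zero (Finset.mem_univ i) (by simp)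

lemma RhoAux.exists_two_le_lam2 {n : ℕ} (hn : 2 ≤ n) {L : Matrix (Fin n) (Fin n) ℝ}
    (hL : L.IsHermitian) (lam2 : ℝ)
    (hlam2 : lam2 = (L.charpoly.roots.sort (· ≤ ·)).getD 1 0) :
    ∃ i j : Fin n, i ≠ j ∧ hL.eigenvalues i ≤ lam2 ∧ hL.eigenvalues j ≤ lam2 := by
  classical
  set l := L.charpoly.roots.sort (· ≤ ·) with hl
  have hperm : (l : Multiset ℝ) = Finset.univ.val.map hL.eigenvalues := by
    rw [hl, Multiset.sort_eq, RhoAux.roots_herm hL]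
  have hlen : l.length = n := by
    have := congrArg Multiset.card hperm
    simpa using this
  have h2 : 2 ≤ l.length := hlen ▸ hn
  obtain ⟨a, b, t, hlt⟩ : ∃ a b t, l = a :: b :: t := by
    match l, h2 with
    | x :: y :: t, _ => exact ⟨x, y, t, rfl⟩
    | [], h => simp at h
    | [x], h => simp at h
  have hlam2b : lam2 = b := by rw [hlam2, hlt]; rfl
  have hsort : l.Pairwise (· ≤ ·) := Multiset.pairwise_sort _ _
  rw [hlt] at hsort
  have hab : a ≤ b := (List.pairwise_cons.mp hsort).1 b (by simp)
  set S : Finset (Fin n) := Finset.univ.filter (fun i => hL.eigenvalues i ≤ lam2) with hS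
  have hcard : 2 ≤ S.card := by
    have h1 : S.card = Multiset.countP (fun x => x ≤ lam2)
        (Finset.univ.val.map hL.eigenvalues) := by
      rw [Multiset.countP_map, hS]
      rfl
    rw [h1, ← hperm, hlt]
    have hc : Multiset.countP (fun x => x ≤ lam2) (↑(a :: b :: t) : Multiset ℝ)
        = List.countP (fun x => decide (x ≤ lam2)) (a :: b :: t) := by
      simp [Multiset.coe_countP]
    rw [hc, List.countP_cons, List.countP_cons]
    have ha : (decide (a ≤ lam2)) = true := by simp [hlam2b, hab]
    have hb : (decide (b ≤ lam2)) = true := by simp [hlam2b]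
    rw [ha, hb]
    simp
  obtain ⟨i, hi, j, hj, hij⟩ := Finset.one_lt_card.mp (by omega : 1 < S.card)
  refine ⟨i, j, hij, ?_, ?_⟩
  · simpa [hS] using hi
  · simpa [hS] using hj

section RhoAuxMat

variable {m n : ℕ}

lemma RhoAux.blockP_mulVec (a : Fin m → Fin n → ℝ) (x : Fin m × Fin n → ℝ) (p : Fin m × Fin n) :
    (blockP a *ᵥ x) p = (projMat (a p.1) *ᵥ fun l => x (p.1, l)) p.2 := by
  simp only [blockP, mulVec, dotProduct, Fintype.sum_prod_type, of_apply]
  rw [Finset.sum_comm]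
  simp [ite_mul, Finset.sum_ite_eq]

lemma RhoAux.kron_mulVec (L : Matrix (Fin m) (Fin m) ℝ) (x : Fin m × Fin n → ℝ)
    (p : Fin m × Fin n) :
    ((L ⊗ₖ (1 : Matrix (Fin n) (Fin n) ℝ)) *ᵥ x) p = (L *ᵥ fun q => x (q, p.2)) p.1 := by
  simp only [mulVec, dotProduct, Fintype.sum_prod_type, kroneckerMap_apply, one_apply]
  congr 1 with q
  rw [Finset.sum_eq_single p.2] <;> simp +contextual [eq_comm]

lemma RhoAux.projMat_mulVec (a : Fin n → ℝ) (w : Fin n → ℝ) :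
    projMat a *ᵥ w = w - ((a ⬝ᵥ a)⁻¹ * (a ⬝ᵥ w)) • a := by
  funext k
  simp only [projMat, sub_mulVec, one_mulVec, smul_mulVec, Pi.sub_apply, Pi.smul_apply,
    smul_eq_mul]
  congr 1
  have : vecMulVec a a *ᵥ w = (a ⬝ᵥ w) • a := by
    funext k'
    simp [vecMulVec, mulVec, dotProduct, Finset.mul_sum, mul_comm, mul_assoc, mul_left_comm]
  rw [this]
  simp [mul_assoc]

lemma RhoAux.projMat_idem (a : Fin n → ℝ) (ha : a ⬝ᵥ a ≠ 0) (w : Fin n → ℝ) :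
    projMat a *ᵥ (projMat a *ᵥ w) = projMat a *ᵥ w := by
  rw [RhoAux.projMat_mulVec, RhoAux.projMat_mulVec]
  have h1 : a ⬝ᵥ (w - ((a ⬝ᵥ a)⁻¹ * (a ⬝ᵥ w)) • a) = 0 := by
    simp only [dotProduct_sub, dotProduct_smul, smul_eq_mul]
    rw [dotProduct_comm a w]
    field_simp
    ring
  rw [h1]
  simp

lemma RhoAux.projMat_symm (a : Fin n → ℝ) : (projMat a)ᵀ = projMat a := by
  unfold projMat
  rw [transpose_sub, transpose_one, transpose_smul]
  congr 1
  ext k l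
  simp [vecMulVec, mul_comm]

lemma RhoAux.blockP_symm (a : Fin m → Fin n → ℝ) : (blockP a)ᵀ = blockP a := by
  ext ⟨i, k⟩ ⟨j, l⟩
  simp only [transpose_apply, blockP, of_apply]
  by_cases h : i = j
  · subst h
    simp only [if_pos rfl]
    conv_lhs => rw [show projMat (a i) l k = (projMat (a i))ᵀ k l from rfl,
      RhoAux.projMat_symm]
  · simp [h, Ne.symm h]

lemma RhoAux.dot_sym {ι : Type*} [Fintype ι] (P : Matrix ι ι ℝ) (hP : Pᵀ = P)
    (z w : ι → ℝ) : z ⬝ᵥ (P *ᵥ w) = (P *ᵥ z) ⬝ᵥ w := by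
  rw [dotProduct_mulVec, ← hP, vecMul_transpose, hP]

lemma RhoAux.dot_slices (x y : Fin m × Fin n → ℝ) :
    x ⬝ᵥ y = ∑ k : Fin n, (fun q => x (q, k)) ⬝ᵥ (fun q => y (q, k)) := by
  simp only [dotProduct, Fintype.sum_prod_type]
  rw [Finset.sum_comm]

end RhoAuxMat

lemma RhoAux.dot_expand {ι : Type*} [Fintype ι]
    (b : OrthonormalBasis ι ℝ (EuclideanSpace ℝ ι)) (x y : ι → ℝ) :
    x ⬝ᵥ y = ∑ i, ((b i : ι → ℝ) ⬝ᵥ x) * ((b i : ι → ℝ) ⬝ᵥ y) := by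
  have h := b.sum_inner_mul_inner ((WithLp.equiv 2 (ι → ℝ)).symm x)
    ((WithLp.equiv 2 (ι → ℝ)).symm y)
  have hxy : (inner ℝ ((WithLp.equiv 2 (ι → ℝ)).symm x) ((WithLp.equiv 2 (ι → ℝ)).symm y) : ℝ)
      = x ⬝ᵥ y := by
    rw [EuclideanSpace.inner_eq_star_dotProduct]
    simp [dotProduct, mul_comm]
  rw [hxy] at h
  rw [← h]
  congr 1
  funext i
  have h1 : (inner ℝ ((WithLp.equiv 2 (ι → ℝ)).symm x) (b i) : ℝ) = (b i : ι → ℝ) ⬝ᵥ x := by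
    rw [real_inner_comm]
    rw [show (b i) = (WithLp.equiv 2 (ι → ℝ)).symm (b i : ι → ℝ) from rfl,
      EuclideanSpace.inner_eq_star_dotProduct]
    simp [dotProduct, mul_comm]
  have h2 : (inner ℝ (b i) ((WithLp.equiv 2 (ι → ℝ)).symm y) : ℝ) = (b i : ι → ℝ) ⬝ᵥ y := by
    rw [show (b i) = (WithLp.equiv 2 (ι → ℝ)).symm (b i : ι → ℝ) from rfl,
      EuclideanSpace.inner_eq_star_dotProduct]
    simp [dotProduct, mul_comm]
  rw [h1, h2]

lemma RhoAux.onb_dot_self {ι : Type*} [Fintype ι] [DecidableEq ι]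
    (b : OrthonormalBasis ι ℝ (EuclideanSpace ℝ ι)) (i j : ι) :
    (b i : ι → ℝ) ⬝ᵥ (b j : ι → ℝ) = if i = j then 1 else 0 := by
  have hb := b.orthonormal
  rw [orthonormal_iff_ite] at hb
  have h := hb i j
  rw [show (b i) = (WithLp.equiv 2 (ι → ℝ)).symm (b i : ι → ℝ) from rfl,
      show (b j) = (WithLp.equiv 2 (ι → ℝ)).symm (b j : ι → ℝ) from rfl,
      EuclideanSpace.inner_eq_star_dotProduct] at h
  simpa [dotProduct, mul_comm] using h

lemma RhoAux.mulVec_eig {ι : Type*} [Fintype ι] [DecidableEq ι] {M : Matrix ι ι ℝ}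
    (hM : M.IsHermitian) (i : ι) :
    M *ᵥ (hM.eigenvectorBasis i : ι → ℝ)
      = hM.eigenvalues i • (hM.eigenvectorBasis i : ι → ℝ) :=
  hM.mulVec_eigenvectorBasis i

set_option maxHeartbeats 1000000 in
/-- Let `A` be invertible, `G` connected with `n ≥ 2` vertices, `ρ` the
smallest nonzero eigenvalue of `P L̄ P` and `λ₂(L)` the second-smallest eigenvalue of the
Laplacian `L` counted with multiplicity (the entry of index 1 in the nondecreasingly sorted
list of roots of its characteristic polynomial). Then `ρ ≤ λ₂(L)`. -/
theorem rho_le_lambda2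
    {n : ℕ} (hn : 2 ≤ n)
    (A : Matrix (Fin n) (Fin n) ℝ) (hA : IsUnit A.det)
    (G : SimpleGraph (Fin n)) [DecidableRel G.Adj] (hG : G.Connected)
    (ρ lam2 : ℝ)
    (hρ : IsLeast {μ : ℝ | μ ≠ 0 ∧
      (blockP (fun i => A i) * (G.lapMatrix ℝ ⊗ₖ (1 : Matrix (Fin n) (Fin n) ℝ))
        * blockP (fun i => A i)).charpoly.IsRoot μ} ρ)
    (hlam2 : lam2 = ((G.lapMatrix ℝ).charpoly.roots.sort (· ≤ ·)).getD 1 0) :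
    ρ ≤ lam2 := by
  classical
  set a : Fin n → Fin n → ℝ := fun i => A i with ha_def
  set L : Matrix (Fin n) (Fin n) ℝ := G.lapMatrix ℝ with hLdef
  set Lb : Matrix (Fin n × Fin n) (Fin n × Fin n) ℝ :=
    L ⊗ₖ (1 : Matrix (Fin n) (Fin n) ℝ) with hLbdef
  set P : Matrix (Fin n × Fin n) (Fin n × Fin n) ℝ := blockP a with hPdef
  set M : Matrix (Fin n × Fin n) (Fin n × Fin n) ℝ := P * Lb * P with hMdef
  -- rows are nonzero
  have hdet : A.det ≠ 0 := hA.ne_zero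
  have hrow : ∀ i, a i ≠ 0 := by
    intro i h
    exact hdet (Matrix.det_eq_zero_of_row_eq_zero i fun j => congrFun h j)
  have hrowdot : ∀ i, a i ⬝ᵥ a i ≠ 0 := fun i h =>
    hrow i (dotProduct_self_eq_zero.mp h)
  -- symmetry facts
  have hPs : Pᵀ = P := by rw [hPdef]; exact RhoAux.blockP_symm a
  have hLpsd : L.PosSemidef := SimpleGraph.posSemidef_lapMatrix ℝ G
  have hLh : L.IsHermitian := hLpsd.1
  have hLs : Lᵀ = L := by
    have h := hLh
    rwa [Matrix.IsHermitian, conjTranspose_eq_transpose_of_trivial] at h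
  have hLe : ∀ p q : Fin n, L q p = L p q := fun p q => congrFun (congrFun hLs p) q
  have hLbs : Lbᵀ = Lb := by
    rw [hLbdef]
    ext ⟨p, k⟩ ⟨q, l⟩
    simp only [transpose_apply, kroneckerMap_apply, one_apply]
    rw [hLe p q]
    by_cases h : k = l <;> simp [h, Ne.symm]
  have hPH : Pᴴ = P := by rw [conjTranspose_eq_transpose_of_trivial, hPs]
  have hLbH : Lb.IsHermitian := by
    rw [Matrix.IsHermitian, conjTranspose_eq_transpose_of_trivial, hLbs]
  have hM : M.IsHermitian := by
    have h := Matrix.isHermitian_mul_mul_conjTranspose P hLbH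
    rwa [hPH] at h
  have hMs : Mᵀ = M := by
    rw [← conjTranspose_eq_transpose_of_trivial]
    exact hM
  -- P is idempotent on vectors
  have hPidem : ∀ z, P *ᵥ (P *ᵥ z) = P *ᵥ z := by
    intro z
    rw [hPdef]
    funext p
    rw [RhoAux.blockP_mulVec]
    have hsl : (fun l => (blockP a *ᵥ z) (p.1, l))
        = projMat (a p.1) *ᵥ (fun l => z (p.1, l)) := by
      funext l
      rw [RhoAux.blockP_mulVec]
    rw [hsl, RhoAux.projMat_idem _ (hrowdot p.1), ← RhoAux.blockP_mulVec]
  -- kernel of M is killed by P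
  have hker : ∀ z, M *ᵥ z = 0 → P *ᵥ z = 0 := by
    intro z hz
    set q : Fin n × Fin n → ℝ := P *ᵥ z with hq
    have hzq : q ⬝ᵥ (Lb *ᵥ q) = 0 := by
      have h1 : M *ᵥ z = P *ᵥ (Lb *ᵥ q) := by
        rw [hMdef, hq, ← mulVec_mulVec, ← mulVec_mulVec]
      have h2 : z ⬝ᵥ (M *ᵥ z) = 0 := by rw [hz, dotProduct_zero]
      rw [h1, RhoAux.dot_sym P hPs, ← hq] at h2
      exact h2
    have hslice : ∀ k, (fun p => q (p, k)) ⬝ᵥ (L *ᵥ fun p => q (p, k)) = 0 := by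
      have hsum : ∑ k : Fin n, (fun p => q (p, k)) ⬝ᵥ (L *ᵥ fun p => q (p, k)) = 0 := by
        rw [← hzq, RhoAux.dot_slices]
        refine Finset.sum_congr rfl fun k _ => ?_
        congr 1
        funext p
        rw [hLbdef]
        exact (RhoAux.kron_mulVec L q (p, k)).symm
      intro k
      refine (Finset.sum_eq_zero_iff_of_nonneg fun k _ => ?_).mp hsum k (Finset.mem_univ k)
      have h := hLpsd.dotProduct_mulVec_nonneg (fun p => q (p, k))
      rwa [star_trivial] at h
    have hconst : ∀ (k : Fin n) (p p' : Fin n), q (p, k) = q (p', k) := by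
      intro k p p'
      have h0 := (G.lapMatrix_toLinearMap₂'_apply'_eq_zero_iff_forall_reachable
        (fun p => q (p, k))).mp ?_ p p' (hG.preconnected p p')
      · exact h0
      · rw [Matrix.toLinearMap₂'_apply']
        exact hslice k
    have hn0 : (0 : ℕ) < n := by omega
    set w : Fin n → ℝ := fun k => q (⟨0, hn0⟩, k) with hwdef
    have hqw : ∀ p : Fin n × Fin n, q p = w p.2 := fun p => hconst p.2 p.1 ⟨0, hn0⟩
    have hPq : P *ᵥ q = q := by rw [hq]; exact hPidem z
    have hdotw : ∀ i, a i ⬝ᵥ w = 0 := by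
      intro i
      have h3 : projMat (a i) *ᵥ w = w := by
        funext k
        have h4 := congrFun hPq (i, k)
        rw [hPdef, RhoAux.blockP_mulVec] at h4
        have h5 : (fun l => q (i, l)) = w := by funext l; exact hqw (i, l)
        rw [h5] at h4
        rw [h4]
        exact hqw (i, k)
      rw [RhoAux.projMat_mulVec] at h3
      have h4 : ((a i ⬝ᵥ a i)⁻¹ * (a i ⬝ᵥ w)) • a i = 0 := by
        have := sub_eq_self.mp h3
        exact this
      rcases smul_eq_zero.mp h4 with h5 | h5
      · rcases mul_eq_zero.mp h5 with h6 | h6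
        · exact absurd (inv_eq_zero.mp h6) (hrowdot i)
        · exact h6
      · exact absurd h5 (hrow i)
    have hw : w = 0 := by
      have hAw : A *ᵥ w = A *ᵥ 0 := by
        rw [mulVec_zero]
        funext i
        exact hdotw i
      exact Matrix.mulVec_injective_iff_isUnit.mpr
        ((Matrix.isUnit_iff_isUnit_det A).mpr hA) hAw
    funext p
    rw [hqw p, hw]
    rfl
  -- select two eigenvalues of L below lam2
  obtain ⟨i₀, j₀, hij, hμ1, hμ2⟩ := RhoAux.exists_two_le_lam2 hn hLh lam2 hlam2
  set b := hLh.eigenvectorBasis with hbdef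
  set u : Fin n → ℝ := (b i₀ : Fin n → ℝ) with hudef
  set v : Fin n → ℝ := (b j₀ : Fin n → ℝ) with hvdef
  set μ1 : ℝ := hLh.eigenvalues i₀ with hμ1def
  set μ2 : ℝ := hLh.eigenvalues j₀ with hμ2def
  have huu : u ⬝ᵥ u = 1 := by
    have := RhoAux.onb_dot_self b i₀ i₀; simpa using this
  have hvv : v ⬝ᵥ v = 1 := by
    have := RhoAux.onb_dot_self b j₀ j₀; simpa using this
  have huv : u ⬝ᵥ v = 0 := by
    have := RhoAux.onb_dot_self b i₀ j₀; simpa [hij] using this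
  have hvu : v ⬝ᵥ u = 0 := by
    have := RhoAux.onb_dot_self b j₀ i₀; simpa [hij.symm] using this
  have hLu : L *ᵥ u = μ1 • u := hLh.mulVec_eigenvectorBasis i₀
  have hLv : L *ᵥ v = μ2 • v := hLh.mulVec_eigenvectorBasis j₀
  -- the 2n-dimensional subspace
  let Φ : ((Fin n → ℝ) × (Fin n → ℝ)) →ₗ[ℝ] ((Fin n × Fin n) → ℝ) :=
    { toFun := fun w => fun p => u p.1 * w.1 p.2 + v p.1 * w.2 p.2
      map_add' := by
        intro w1 w2
        funext p
        simp only [Prod.fst_add, Prod.snd_add, Pi.add_apply]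
        ring
      map_smul' := by
        intro c w
        funext p
        simp only [Prod.smul_fst, Prod.smul_snd, Pi.smul_apply, smul_eq_mul,
          RingHom.id_apply]
        ring }
  have hΦapp : ∀ w p, Φ w p = u p.1 * w.1 p.2 + v p.1 * w.2 p.2 := fun w p => rfl
  have hslicex : ∀ w (k : Fin n), (fun p => Φ w (p, k)) = w.1 k • u + w.2 k • v := by
    intro w k
    funext p
    rw [hΦapp]
    simp only [Pi.add_apply, Pi.smul_apply, smul_eq_mul]
    ring
  have hΦinj : Function.Injective Φ := by
    rw [injective_iff_map_eq_zero]
    intro w hwz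
    have hk : ∀ k, w.1 k = 0 ∧ w.2 k = 0 := by
      intro k
      have hy2 : w.1 k • u + w.2 k • v = 0 := by
        rw [← hslicex w k]
        funext p
        rw [hwz]
        rfl
      constructor
      · have h1 : u ⬝ᵥ (w.1 k • u + w.2 k • v) = w.1 k := by
          simp [dotProduct_add, dotProduct_smul, smul_eq_mul, huu, huv]
        rw [hy2, dotProduct_zero] at h1
        exact h1.symm
      · have h1 : v ⬝ᵥ (w.1 k • u + w.2 k • v) = w.2 k := by
          simp [dotProduct_add, dotProduct_smul, smul_eq_mul, hvv, hvu]
        rw [hy2, dotProduct_zero] at h1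
        exact h1.symm
    have h1 : w.1 = 0 := funext fun k => (hk k).1
    have h2 : w.2 = 0 := funext fun k => (hk k).2
    exact Prod.ext h1 h2
  have hrankΦ : Module.finrank ℝ (LinearMap.range Φ) = n + n := by
    rw [LinearMap.finrank_range_of_inj hΦinj]
    simp [Module.finrank_prod, Module.finrank_fintype_fun_eq_card]
  -- the range-P subspace as a kernel
  set Q : ((Fin n × Fin n) → ℝ) →ₗ[ℝ] ((Fin n × Fin n) → ℝ) :=
    Matrix.mulVecLin ((1 : Matrix (Fin n × Fin n) (Fin n × Fin n) ℝ) - P) with hQdef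
  have hQapp : ∀ x, Q x = x - P *ᵥ x := by
    intro x
    rw [hQdef, Matrix.mulVecLin_apply, sub_mulVec, one_mulVec]
  have hQrange : Module.finrank ℝ (LinearMap.range Q) ≤ n := by
    set bv : Fin n → (Fin n × Fin n) → ℝ :=
      fun i => fun p => if p.1 = i then a i p.2 else 0 with hbv
    have hsub : LinearMap.range Q ≤ Submodule.span ℝ (Set.range bv) := by
      rintro _ ⟨x, rfl⟩
      have hQx : Q x = ∑ i : Fin n,
          ((a i ⬝ᵥ a i)⁻¹ * (a i ⬝ᵥ fun l => x (i, l))) • bv i := by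
        funext p
        have hRHS : (∑ i : Fin n,
            ((a i ⬝ᵥ a i)⁻¹ * (a i ⬝ᵥ fun l => x (i, l))) • bv i) p
            = ((a p.1 ⬝ᵥ a p.1)⁻¹ * (a p.1 ⬝ᵥ fun l => x (p.1, l))) * a p.1 p.2 := by
          simp only [Finset.sum_apply, Pi.smul_apply, hbv, smul_eq_mul, mul_ite, mul_zero]
          rw [Finset.sum_ite_eq]
          simp
        rw [hRHS, hQapp]
        simp only [Pi.sub_apply]
        rw [hPdef, RhoAux.blockP_mulVec, RhoAux.projMat_mulVec]
        simp only [Pi.sub_apply, Pi.smul_apply, smul_eq_mul]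
        rw [show x (p.1, p.2) = x p from rfl]
        ring
      rw [hQx]
      exact Submodule.sum_mem _ fun i _ =>
        Submodule.smul_mem _ _ (Submodule.subset_span ⟨i, rfl⟩)
    calc Module.finrank ℝ (LinearMap.range Q)
        ≤ Module.finrank ℝ (Submodule.span ℝ (Set.range bv)) := Submodule.finrank_mono hsub
      _ ≤ (Set.range bv).toFinset.card := finrank_span_le_card _
      _ ≤ n := by
          rw [Set.toFinset_range]
          exact le_trans (Finset.card_image_le) (by simp)
  have hVdim : Module.finrank ℝ ((Fin n × Fin n) → ℝ) = n * n := by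
    rw [Module.finrank_fintype_fun_eq_card]
    simp
  have hQker : n * n ≤ Module.finrank ℝ (LinearMap.ker Q) + n := by
    have h := LinearMap.finrank_range_add_finrank_ker Q
    rw [hVdim] at h
    omega
  -- find a nonzero x in the intersection
  obtain ⟨x, hxmem, hxne⟩ : ∃ x ∈ LinearMap.range Φ ⊓ LinearMap.ker Q, x ≠ 0 := by
    have h1 := Submodule.finrank_sup_add_finrank_inf_eq (LinearMap.range Φ) (LinearMap.ker Q)
    have h2 : Module.finrank ℝ ↥(LinearMap.range Φ ⊔ LinearMap.ker Q) ≤ n * n := by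
      rw [← hVdim]
      exact Submodule.finrank_le _
    have hpos : 0 < Module.finrank ℝ ↥(LinearMap.range Φ ⊓ LinearMap.ker Q) := by
      have h3 : n ≤ Module.finrank ℝ ↥(LinearMap.ker Q) + n := le_add_self
      omega
    have hne : LinearMap.range Φ ⊓ LinearMap.ker Q ≠ ⊥ := by
      intro hb
      rw [hb, finrank_bot] at hpos
      omega
    obtain ⟨x, hx, hxne⟩ := Submodule.ne_bot_iff _ |>.mp hne
    exact ⟨x, hx, hxne⟩
  obtain ⟨hxΦ, hxT⟩ := Submodule.mem_inf.mp hxmem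
  obtain ⟨w, rfl⟩ := hxΦ
  have hPx : P *ᵥ (Φ w) = Φ w := by
    have h := LinearMap.mem_ker.mp hxT
    rw [hQapp, sub_eq_zero] at h
    exact h.symm
  -- quadratic form computations
  have hdothelp : ∀ c1 c2 d1 d2 : ℝ,
      (c1 • u + c2 • v) ⬝ᵥ (d1 • u + d2 • v) = c1 * d1 + c2 * d2 := by
    intro c1 c2 d1 d2
    simp only [dotProduct_add, add_dotProduct, dotProduct_smul, smul_dotProduct,
      smul_eq_mul, huu, hvv, huv, hvu]
    ring
  have hq1 : Φ w ⬝ᵥ Φ w = (w.1 ⬝ᵥ w.1) + (w.2 ⬝ᵥ w.2) := by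
    rw [RhoAux.dot_slices]
    have h : ∀ k : Fin n, (fun p => Φ w (p, k)) ⬝ᵥ (fun p => Φ w (p, k))
        = w.1 k * w.1 k + w.2 k * w.2 k := fun k => by rw [hslicex w k, hdothelp]
    rw [Finset.sum_congr rfl fun k _ => h k, Finset.sum_add_distrib]
    rfl
  have hq2 : Φ w ⬝ᵥ (Lb *ᵥ Φ w) = μ1 * (w.1 ⬝ᵥ w.1) + μ2 * (w.2 ⬝ᵥ w.2) := by
    rw [RhoAux.dot_slices]
    have hterm : ∀ k : Fin n, (fun p => Φ w (p, k)) ⬝ᵥ (fun p => (Lb *ᵥ Φ w) (p, k))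
        = μ1 * (w.1 k * w.1 k) + μ2 * (w.2 k * w.2 k) := by
      intro k
      have hLslice : (fun p => (Lb *ᵥ Φ w) (p, k))
          = (w.1 k * μ1) • u + (w.2 k * μ2) • v := by
        funext p
        rw [hLbdef, RhoAux.kron_mulVec]
        rw [show (fun q' => Φ w (q', k)) = w.1 k • u + w.2 k • v from hslicex w k]
        rw [mulVec_add, mulVec_smul, mulVec_smul, hLu, hLv]
        simp only [Pi.add_apply, Pi.smul_apply, smul_eq_mul]
        ring
      rw [hslicex w k, hLslice, hdothelp]
      ring
    rw [Finset.sum_congr rfl (fun k _ => hterm k)]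
    rw [Finset.sum_add_distrib]
    simp only [dotProduct, Finset.mul_sum]
  have hw1nn : 0 ≤ w.1 ⬝ᵥ w.1 := Finset.sum_nonneg fun k _ => mul_self_nonneg _
  have hw2nn : 0 ≤ w.2 ⬝ᵥ w.2 := Finset.sum_nonneg fun k _ => mul_self_nonneg _
  have hfin2 : Φ w ⬝ᵥ (Lb *ᵥ Φ w) ≤ lam2 * (Φ w ⬝ᵥ Φ w) := by
    rw [hq1, hq2]
    nlinarith [hμ1, hμ2, hw1nn, hw2nn]
  have hMx : Φ w ⬝ᵥ (M *ᵥ Φ w) = Φ w ⬝ᵥ (Lb *ᵥ Φ w) := by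
    have h1 : M *ᵥ Φ w = P *ᵥ (Lb *ᵥ Φ w) := by
      rw [hMdef, ← mulVec_mulVec, ← mulVec_mulVec, hPx]
    rw [h1, RhoAux.dot_sym P hPs, hPx]
  -- spectral lower bound
  have hlow : ρ * (Φ w ⬝ᵥ Φ w) ≤ Φ w ⬝ᵥ (M *ᵥ Φ w) := by
    set f := hM.eigenvectorBasis with hfdef
    set ν := hM.eigenvalues with hνdef
    have hexp1 : Φ w ⬝ᵥ Φ w
        = ∑ i, ((f i : (Fin n × Fin n) → ℝ) ⬝ᵥ Φ w) * ((f i : (Fin n × Fin n) → ℝ) ⬝ᵥ Φ w) :=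
      RhoAux.dot_expand f _ _
    have hexp2 : Φ w ⬝ᵥ (M *ᵥ Φ w)
        = ∑ i, ((f i : (Fin n × Fin n) → ℝ) ⬝ᵥ Φ w)
          * ((f i : (Fin n × Fin n) → ℝ) ⬝ᵥ (M *ᵥ Φ w)) :=
      RhoAux.dot_expand f _ _
    have hterm : ∀ i, ((f i : (Fin n × Fin n) → ℝ) ⬝ᵥ (M *ᵥ Φ w))
        = ν i * ((f i : (Fin n × Fin n) → ℝ) ⬝ᵥ Φ w) := by
      intro i
      rw [RhoAux.dot_sym M hMs]
      simp only [hfdef, hνdef]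
      rw [RhoAux.mulVec_eig hM i, smul_dotProduct]
      rfl
    have hzero : ∀ i, ν i = 0 → ((f i : (Fin n × Fin n) → ℝ) ⬝ᵥ Φ w) = 0 := by
      intro i h0
      have hf : M *ᵥ (f i : (Fin n × Fin n) → ℝ) = 0 := by
        simp only [hfdef]
        rw [RhoAux.mulVec_eig hM i]
        rw [show hM.eigenvalues i = ν i from rfl, h0, zero_smul]
      have hPf : P *ᵥ (f i : (Fin n × Fin n) → ℝ) = 0 := hker _ hf
      rw [show Φ w = P *ᵥ Φ w from hPx.symm, RhoAux.dot_sym P hPs, hPf, zero_dotProduct]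
    have hge : ∀ i, ν i ≠ 0 → ρ ≤ ν i := fun i h0 => hρ.2 ⟨h0, RhoAux.isRoot_herm hM i⟩
    rw [hexp2, hexp1, Finset.mul_sum]
    apply Finset.sum_le_sum
    intro i _
    by_cases h0 : ν i = 0
    · rw [hterm i, hzero i h0]
      simp
    · rw [hterm i]
      have h1 := hge i h0
      nlinarith [mul_self_nonneg ((f i : (Fin n × Fin n) → ℝ) ⬝ᵥ Φ w)]
  have hxx : 0 < Φ w ⬝ᵥ Φ w := by
    have h0 : Φ w ⬝ᵥ Φ w ≠ 0 := fun h => hxne (dotProduct_self_eq_zero.mp h)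
    have hnn : 0 ≤ Φ w ⬝ᵥ Φ w := Finset.sum_nonneg fun p _ => mul_self_nonneg _
    exact lt_of_le_of_ne hnn (Ne.symm h0)
  have final : ρ * (Φ w ⬝ᵥ Φ w) ≤ lam2 * (Φ w ⬝ᵥ Φ w) := by
    refine le_trans hlow ?_
    rw [hMx]
    exact hfin2
  nlinarith [final, hxx]
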